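/- The number of lattice paths from (0,0) to (m+k, k) using unit right (R) and up (U) steps that never go above the line x - y = 1 except possibly before the first R step equals the sum over all (x_1,...,x_m) of nonnegative integers with x_1 + ⋯ + x_m = k of ∏_{i=1}^m Catalan(x_i), via the bijection that splits a path at the last visits to the lines x - y = i for i = 1, ..., m-1. -/

import Mathlib

open List

namespace LatticePathAux

/-- set of good paths -/
def pathSet (m k : ℕ) : Set (List Bool) :=
  {l : List Bool | l.count true = m + k ∧ l.count false = k ∧
    ∀ i, 0 < (l.take i).count true → (l.take i).count false < (l.take i).count true}

def toB : DyckStep → Bool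
  | DyckStep.U => true
  | DyckStep.D => false

def toD : Bool → DyckStep
  | true => DyckStep.U
  | false => DyckStep.D

lemma toB_toD (b : Bool) : toB (toD b) = b := by cases b <;> rfl

lemma toD_toB (s : DyckStep) : toD (toB s) = s := by cases s <;> rfl

lemma toB_inj : Function.Injective toB := by
  intro a b h; cases a <;> cases b <;> simp [toB] at h ⊢

lemma toD_inj : Function.Injective toD := by
  intro a b h; cases a <;> cases b <;> simp [toD] at h ⊢

lemma count_true_map (s : List DyckStep) : (s.map toB).count true = s.count DyckStep.U :=
  s.count_map_of_injective _ toB_inj DyckStep.U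

lemma count_false_map (s : List DyckStep) : (s.map toB).count false = s.count DyckStep.D :=
  s.count_map_of_injective _ toB_inj DyckStep.D

lemma count_U_map (x : List Bool) : (x.map toD).count DyckStep.U = x.count true :=
  x.count_map_of_injective _ toD_inj true

lemma count_D_map (x : List Bool) : (x.map toD).count DyckStep.D = x.count false :=
  x.count_map_of_injective _ toD_inj false

lemma length_eq_count (l : List Bool) : l.length = l.count true + l.count false := by
  induction l with
  | nil => simp
  | cons a t ih =>
    cases a <;> rw [List.length_cons, List.count_cons, List.count_cons] <;>
      simp only [ih, beq_iff_eq, Bool.true_eq_false, Bool.false_eq_true, if_true, if_false,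
        reduceIte] <;> omega

/-- Dyck word associated to the image list under toB -/
lemma dyck_count_true (d : DyckWord) : (d.toList.map toB).count true = d.semilength := by
  rw [count_true_map]; rfl

lemma dyck_count_false (d : DyckWord) : (d.toList.map toB).count false = d.semilength := by
  rw [count_false_map, ← DyckWord.semilength_eq_count_D]

lemma dyck_length (d : DyckWord) : (d.toList.map toB).length = 2 * d.semilength := by
  rw [List.length_map, DyckWord.two_mul_semilength_eq_length]

lemma dyck_prefix (d : DyckWord) (i : ℕ) :
    ((d.toList.map toB).take i).count false ≤ ((d.toList.map toB).take i).count true := by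
  rw [← List.map_take, count_true_map, count_false_map]
  exact d.count_D_le_count_U i

end LatticePathAux

namespace LatticePathAux

lemma count_take_le (c : Bool) (l : List Bool) (i j : ℕ) (h : i ≤ j) :
    (l.take i).count c ≤ (l.take j).count c := by
  have : (l.take j).take i = l.take i := by rw [List.take_take, min_eq_left h]
  rw [← this]
  exact ((l.take j).take_sublist i).count_le c

lemma pos_count {m k : ℕ} (hm : 1 ≤ m) {l : List Bool} (hl : l ∈ pathSet m k) :
    ∀ j, 1 ≤ j → 0 < (l.take j).count true := by
  obtain ⟨h1, h2, h3⟩ := hl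
  have key : 0 < (l.take 1).count true := by
    have hex : ∃ i, 0 < (l.take i).count true := ⟨l.length, by rw [List.take_length, h1]; omega⟩
    set i0 := Nat.find hex with hi0def
    have hi0 : 0 < (l.take i0).count true := Nat.find_spec hex
    have hi0pos : i0 ≠ 0 := by
      intro h
      rw [h] at hi0; simp at hi0
    have hprev : (l.take (i0 - 1)).count true = 0 := by
      have := Nat.find_min hex (m := i0 - 1) (by omega)
      omega
    obtain ⟨n, hn⟩ : ∃ n, i0 = n + 1 := ⟨i0 - 1, by omega⟩
    have hn' : i0 - 1 = n := by omega
    have hsplit : l.take i0 = l.take (i0 - 1) ++ (l.drop (i0 - 1)).take 1 := by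
      rw [hn', hn, List.take_add]
    have hct : (l.take i0).count true =
        (l.take (i0 - 1)).count true + ((l.drop (i0 - 1)).take 1).count true := by
      rw [hsplit, List.count_append]
    have hcf : (l.take i0).count false =
        (l.take (i0 - 1)).count false + ((l.drop (i0 - 1)).take 1).count false := by
      rw [hsplit, List.count_append]
    have hle1 : ((l.drop (i0 - 1)).take 1).count true ≤ 1 := by
      calc ((l.drop (i0 - 1)).take 1).count true ≤ ((l.drop (i0 - 1)).take 1).length :=
            List.count_le_length
        _ ≤ 1 := by rw [List.length_take]; omega
    have hlt := h3 i0 hi0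
    have hcfprev : (l.take (i0 - 1)).count false = 0 := by omega
    have hlen0 : (l.take (i0 - 1)).length = 0 := by
      rw [length_eq_count, hprev, hcfprev]
    have hlenl : 0 < l.length := by
      rcases Nat.eq_zero_or_pos l.length with h | h
      · rw [List.length_eq_zero_iff] at h; rw [h] at h1; simp at h1; omega
      · exact h
    have : i0 - 1 = 0 := by
      rw [List.length_take] at hlen0; omega
    have : i0 = 1 := by omega
    rwa [this] at hi0
  intro j hj
  exact lt_of_lt_of_le key (count_take_le true l 1 j hj)

lemma weak_prefix {m k : ℕ} (hm : 1 ≤ m) {l : List Bool} (hl : l ∈ pathSet m k) :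
    ∀ j, (l.take j).count false ≤ (l.take j).count true := by
  intro j
  rcases Nat.eq_zero_or_pos j with rfl | hj
  · simp
  · exact le_of_lt (hl.2.2 j (pos_count hm hl j hj))

def glue (d : DyckWord) (l : List Bool) : List Bool := true :: (d.toList.map toB ++ l)

lemma glue_mem {m k a b : ℕ} (hab : a + b = k) (d : DyckWord) (hd : d.semilength = a)
    {l : List Bool} (h1 : l.count true = m + b) (h2 : l.count false = b)
    (hweak : ∀ j, (l.take j).count false ≤ (l.take j).count true) :
    glue d l ∈ pathSet (m + 1) k := by
  have hA1 := dyck_count_true d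
  have hA2 := dyck_count_false d
  refine ⟨?_, ?_, ?_⟩
  · rw [glue, List.count_cons, List.count_append, hA1, hd, h1]; simp; omega
  · rw [glue, List.count_cons, List.count_append, hA2, hd, h2]; simp; omega
  · intro i hip
    rcases i with - | j
    · simp at hip
    rw [glue]
    rw [List.take_succ_cons, List.count_cons, List.count_cons]
    simp only [beq_iff_eq, Bool.true_eq_false, if_false, Bool.false_eq_true, reduceIte]
    rw [List.take_append, List.count_append, List.count_append]
    have hd1 := dyck_prefix d j
    have hl1 := hweak (j - (d.toList.map toB).length)
    omega

def mkDyck (r : List Bool) (hbal : r.count false = r.count true)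
    (hpre : ∀ j, (r.take j).count false ≤ (r.take j).count true) : DyckWord where
  toList := r.map toD
  count_U_eq_count_D := by rw [count_U_map, count_D_map, hbal]
  count_D_le_count_U i := by rw [← List.map_take, count_U_map, count_D_map]; exact hpre i

lemma mkDyck_map (r : List Bool) (h1 h2) : (mkDyck r h1 h2).toList.map toB = r := by
  show (r.map toD).map toB = r
  rw [List.map_map]
  have : toB ∘ toD = id := funext toB_toD
  rw [this, List.map_id]

lemma mkDyck_semilength (r : List Bool) (h1 h2) :
    (mkDyck r h1 h2).semilength = r.count true := count_U_map r

end LatticePathAux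

namespace LatticePathAux

lemma no_lt {m b₁ b₂ : ℕ} (hm : 1 ≤ m) (d₁ d₂ : DyckWord) {l₁ l₂ : List Bool}
    (hl₁ : l₁ ∈ pathSet m b₁) (hl₂ : l₂ ∈ pathSet m b₂)
    (heq : d₁.toList.map toB ++ l₁ = d₂.toList.map toB ++ l₂)
    (hlt : (d₁.toList.map toB).length < (d₂.toList.map toB).length) : False := by
  set A₁ := d₁.toList.map toB
  set A₂ := d₂.toList.map toB
  set n := A₂.length
  have h2 : (A₂ ++ l₂).take n = A₂ := by
    rw [List.take_append, Nat.sub_self, List.take_length, List.take_zero,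
      List.append_nil]
  have h1 : (A₁ ++ l₁).take n = A₁ ++ l₁.take (n - A₁.length) := by
    rw [List.take_append, List.take_of_length_le (le_of_lt hlt)]
  have hcnt : ∀ c : Bool, A₁.count c + (l₁.take (n - A₁.length)).count c = A₂.count c := by
    intro c
    have := congrArg (fun t => (t.take n).count c) heq
    rw [h1, h2, List.count_append] at this
    exact this
  have hj : 1 ≤ n - A₁.length := by omega
  have hstrict : (l₁.take (n - A₁.length)).count false < (l₁.take (n - A₁.length)).count true :=
    hl₁.2.2 _ (pos_count hm hl₁ _ hj)
  have e1 := hcnt true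
  have e2 := hcnt false
  have c1 : A₁.count true = d₁.semilength := dyck_count_true d₁
  have c2 : A₁.count false = d₁.semilength := dyck_count_false d₁
  have c3 : A₂.count true = d₂.semilength := dyck_count_true d₂
  have c4 : A₂.count false = d₂.semilength := dyck_count_false d₂
  omega

lemma glue_inj {m b₁ b₂ : ℕ} (hm : 1 ≤ m) (d₁ d₂ : DyckWord) {l₁ l₂ : List Bool}
    (hl₁ : l₁ ∈ pathSet m b₁) (hl₂ : l₂ ∈ pathSet m b₂)
    (heq : glue d₁ l₁ = glue d₂ l₂) : d₁ = d₂ ∧ l₁ = l₂ := by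
  rw [glue, glue, List.cons.injEq] at heq
  have heq' := heq.2
  have hlen : (d₁.toList.map toB).length = (d₂.toList.map toB).length := by
    rcases lt_trichotomy (d₁.toList.map toB).length (d₂.toList.map toB).length with h | h | h
    · exact absurd (no_lt hm d₁ d₂ hl₁ hl₂ heq' h) not_false
    · exact h
    · exact absurd (no_lt hm d₂ d₁ hl₂ hl₁ heq'.symm h) not_false
  obtain ⟨hA, hl⟩ := List.append_inj heq' hlen
  refine ⟨?_, hl⟩
  have : d₁.toList = d₂.toList := List.map_injective_iff.mpr toB_inj hA
  exact DyckWord.ext this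

lemma glue_surj {m k : ℕ} {l : List Bool} (hl : l ∈ pathSet (m + 1) k) :
    ∃ a b, a + b = k ∧ ∃ d : DyckWord, d.semilength = a ∧ ∃ l',
      (l'.count true = m + b ∧ l'.count false = b ∧
        ∀ i, 0 < (l'.take i).count true → (l'.take i).count false < (l'.take i).count true) ∧
      glue d l' = l := by
  classical
  obtain ⟨h1, h2, h3⟩ := hl
  -- l starts with true
  have hhead : 0 < (l.take 1).count true := pos_count (by omega) ⟨h1, h2, h3⟩ 1 le_rfl
  obtain ⟨c, r, rfl⟩ : ∃ c r, l = c :: r := by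
    rcases l with - | ⟨c, r⟩
    · simp at hhead
    · exact ⟨c, r, rfl⟩
  have hc : c = true := by
    rcases c with - | -
    · simp [List.count_cons] at hhead
    · rfl
  subst hc
  have hr1 : r.count true = m + k := by
    rw [List.count_cons] at h1; simp at h1; omega
  have hr2 : r.count false = k := by
    rw [List.count_cons] at h2; simpa using h2
  have hrpre : ∀ j, (r.take j).count false ≤ (r.take j).count true := by
    intro j
    have := h3 (j + 1) (by
      rw [List.take_succ_cons, List.count_cons]; simp)
    rw [List.take_succ_cons, List.count_cons, List.count_cons] at this
    simp only [beq_iff_eq, Bool.true_eq_false, if_false, Bool.false_eq_true, reduceIte] at this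
    omega
  set P : ℕ → Prop := fun j => (r.take j).count false = (r.take j).count true with hP
  have hP0 : P 0 := by simp [hP]
  set t := Nat.findGreatest P r.length with ht
  have hPt : P t := Nat.findGreatest_spec (Nat.zero_le _) hP0
  have hmax : ∀ j, t < j → j ≤ r.length → ¬ P j := fun j h1' h2' =>
    Nat.findGreatest_is_greatest h1' h2'
  set A := r.take t with hA
  set l' := r.drop t with hl'
  have hAl : A ++ l' = r := List.take_append_drop t r
  set a := A.count true with ha
  have hAf : A.count false = a := hPt
  have hcount : ∀ c : Bool, A.count c + l'.count c = r.count c := by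
    intro c; rw [← List.count_append, hAl]
  have hak : a ≤ k := by
    have := hcount false; omega
  set b := k - a with hb
  refine ⟨a, b, by omega, mkDyck A hAf (fun j => by
      rw [hA, List.take_take]
      exact hrpre (min j t)), ?_, l', ⟨?_, ?_, ?_⟩, ?_⟩
  · rw [mkDyck_semilength]
  · have h1' := hcount true; omega
  · have h2' := hcount false; omega
  · intro j hjpos
    have hj1 : 1 ≤ j := by
      rcases Nat.eq_zero_or_pos j with rfl | h
      · simp at hjpos
      · exact h
    have hsplit : r.take (t + j) = A ++ l'.take j := by
      rw [List.take_add]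
    have hcnt : ∀ c : Bool, (r.take (t + j)).count c = A.count c + (l'.take j).count c := by
      intro c; rw [hsplit, List.count_append]
    have hle : (l'.take j).count false ≤ (l'.take j).count true := by
      have := hrpre (t + j)
      have e1 := hcnt true
      have e2 := hcnt false
      omega
    rcases lt_or_eq_of_le hle with h | h
    · exact h
    · exfalso
      have hPtj : P (t + j) := by
        rw [hP]
        have e1 := hcnt true
        have e2 := hcnt false
        omega
      rcases le_or_gt (t + j) r.length with hle' | hlt'
      · exact hmax (t + j) (by omega) hle' hPtj
      · have hfull : r.take (t + j) = r := List.take_of_length_le (le_of_lt hlt')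
        have htle : t ≤ r.length := Nat.findGreatest_le r.length
        have hPlen : P r.length := by
          have h2' : (r.take (t + j)).count false = (r.take (t + j)).count true := hPtj
          rw [hfull] at h2'
          show (r.take r.length).count false = (r.take r.length).count true
          rwa [List.take_length]
        have htlen : t = r.length := by
          rcases lt_or_eq_of_le htle with h' | h'
          · exact absurd hPlen (hmax r.length h' le_rfl)
          · exact h'
        have hnil : l' = [] := by rw [hl', htlen, List.drop_length]
        rw [hnil] at hjpos
        simp at hjpos
  · rw [glue, mkDyck_map, hAl]

end LatticePathAux

namespace LatticePathAux

lemma finite_pathSet (m k : ℕ) : (pathSet m k).Finite := by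
  apply Set.Finite.subset (List.finite_length_eq Bool (m + 2 * k))
  intro l hl
  have hlen := length_eq_count l
  simp only [Set.mem_setOf_eq]
  rw [hlen, hl.1, hl.2.1]
  omega

lemma card_one (k : ℕ) : Nat.card (pathSet 1 k) = catalan k := by
  classical
  rw [← DyckWord.card_dyckWord_semilength_eq_catalan k, ← Nat.card_eq_fintype_card]
  apply Nat.card_congr
  refine (Equiv.ofBijective (fun p : {p : DyckWord // p.semilength = k} =>
    (⟨glue p.1 [], glue_mem (m := 0) (a := k) (b := 0) (by omega) p.1 p.2 (by simp) (by simp)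
      (by simp)⟩ : pathSet 1 k)) ⟨?_, ?_⟩).symm
  · intro p q h
    have h' : glue p.1 [] = glue q.1 [] := congrArg Subtype.val h
    rw [glue, glue, List.cons.injEq, List.append_nil, List.append_nil] at h'
    have : p.1.toList = q.1.toList := List.map_injective_iff.mpr toB_inj h'.2
    exact Subtype.ext (DyckWord.ext this)
  · rintro ⟨l, hl⟩
    obtain ⟨a, b, hab, d, hd, l', ⟨h1, h2, h3⟩, hglue⟩ := glue_surj (m := 0) hl
    have hb : b = 0 := by
      by_contra hb0
      have hctpos : 0 < l'.count true := by rw [h1]; omega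
      have := h3 l'.length (by rwa [List.take_length])
      rw [List.take_length, h1, h2] at this
      omega
    have hnil : l' = [] := by
      have := length_eq_count l'
      rw [h1, h2, hb] at this
      exact List.length_eq_zero_iff.mp (by omega)
    subst hnil hb
    exact ⟨⟨d, by omega⟩, Subtype.ext hglue⟩

lemma card_step (m k : ℕ) (hm : 1 ≤ m) :
    Nat.card (pathSet (m + 1) k) =
      ∑ ab ∈ Finset.HasAntidiagonal.antidiagonal k, catalan ab.1 * Nat.card (pathSet m ab.2) := by
  classical
  letI : ∀ b : ℕ, Fintype (pathSet m b) := fun b => (finite_pathSet m b).fintype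
  set T := (ab : Finset.HasAntidiagonal.antidiagonal k) ×
    ({p : DyckWord // p.semilength = ab.1.1} × pathSet m ab.1.2) with hT
  have hG : Function.Bijective (fun x : T =>
      (⟨glue x.2.1.1 x.2.2.1, glue_mem (Finset.HasAntidiagonal.mem_antidiagonal.mp x.1.2) x.2.1.1 x.2.1.2
        x.2.2.2.1 x.2.2.2.2.1 (weak_prefix hm x.2.2.2)⟩ : pathSet (m + 1) k)) := by
    constructor
    · rintro ⟨⟨ab1, hab1⟩, ⟨d1, hd1⟩, ⟨l1, hl1⟩⟩ ⟨⟨ab2, hab2⟩, ⟨d2, hd2⟩, ⟨l2, hl2⟩⟩ h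
      have h' : glue d1 l1 = glue d2 l2 := congrArg Subtype.val h
      obtain ⟨hd, hll⟩ := glue_inj hm d1 d2 hl1 hl2 h'
      subst hd; subst hll
      have hab : ab1 = ab2 := by
        have e1 : ab1.1 = ab2.1 := by rw [← hd1, ← hd2]
        have e2 : ab1.2 = ab2.2 := by rw [← hl1.2.1, ← hl2.2.1]
        exact Prod.ext e1 e2
      subst hab
      rfl
    · rintro ⟨l, hl⟩
      obtain ⟨a, b, hab, d, hd, l', hl', hglue⟩ := glue_surj hl
      exact ⟨⟨⟨(a, b), Finset.HasAntidiagonal.mem_antidiagonal.mpr hab⟩, ⟨d, hd⟩, ⟨l', hl'⟩⟩,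
        Subtype.ext hglue⟩
  rw [← Nat.card_eq_of_bijective _ hG]
  rw [Nat.card_eq_fintype_card, Fintype.card_sigma]
  rw [← Finset.sum_coe_sort (Finset.HasAntidiagonal.antidiagonal k)
    (fun ab => catalan ab.1 * Nat.card (pathSet m ab.2))]
  refine Finset.sum_congr rfl fun ab _ => ?_
  rw [Fintype.card_prod, DyckWord.card_dyckWord_semilength_eq_catalan,
    Nat.card_eq_fintype_card]

end LatticePathAux

namespace LatticePathAux

lemma sum_tuple_succ (f : ℕ → ℕ) (m n : ℕ) :
    ∑ x ∈ Finset.Nat.antidiagonalTuple (m + 1) n, ∏ i, f (x i) =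
      ∑ ab ∈ Finset.HasAntidiagonal.antidiagonal n, f ab.1 *
        ∑ y ∈ Finset.Nat.antidiagonalTuple m ab.2, ∏ i, f (y i) := by
  simp_rw [Finset.mul_sum]
  rw [Finset.sum_sigma']
  refine (Finset.sum_nbij' (i := fun p => Fin.cons p.1.1 p.2)
    (j := fun x => ⟨(x 0, ∑ i, x (Fin.succ i)), Fin.tail x⟩) ?_ ?_ ?_ ?_ ?_).symm
  · rintro ⟨ab, y⟩ hp
    rw [Finset.mem_sigma] at hp
    obtain ⟨h1, h2⟩ := hp
    rw [Finset.HasAntidiagonal.mem_antidiagonal] at h1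
    rw [Finset.Nat.mem_antidiagonalTuple] at h2 ⊢
    dsimp only at h1 h2
    rw [Fin.sum_univ_succ]
    simp only [Fin.cons_zero, Fin.cons_succ]
    omega
  · intro x hx
    rw [Finset.Nat.mem_antidiagonalTuple] at hx
    rw [Finset.mem_sigma, Finset.HasAntidiagonal.mem_antidiagonal, Finset.Nat.mem_antidiagonalTuple]
    constructor
    · rw [← hx, Fin.sum_univ_succ]
    · rfl
  · rintro ⟨ab, y⟩ hp
    rw [Finset.mem_sigma] at hp
    obtain ⟨h1, h2⟩ := hp
    rw [Finset.HasAntidiagonal.mem_antidiagonal] at h1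
    rw [Finset.Nat.mem_antidiagonalTuple] at h2
    dsimp only at h1 h2
    have e1 : (Fin.cons ab.1 y : Fin (m + 1) → ℕ) 0 = ab.1 := Fin.cons_zero _ _
    have e2 : ∀ i : Fin m, (Fin.cons ab.1 y : Fin (m + 1) → ℕ) (Fin.succ i) = y i :=
      fun i => Fin.cons_succ _ _ _
    have e3 : Fin.tail (Fin.cons ab.1 y : Fin (m + 1) → ℕ) = y := Fin.tail_cons _ _
    have e4 : ∑ i, (Fin.cons ab.1 y : Fin (m + 1) → ℕ) (Fin.succ i) = ab.2 := by
      simp_rw [e2]; exact h2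
    refine Sigma.ext ?_ ?_
    · simp only [e1, e4]
    · simp only [e3]
      exact HEq.rfl
  · intro x hx
    exact Fin.cons_self_tail x
  · rintro ⟨ab, y⟩ hp
    rw [Fin.prod_univ_succ]
    simp only [Fin.cons_zero, Fin.cons_succ]

lemma card_pathSet : ∀ m k : ℕ, Nat.card (pathSet (m + 1) k) =
    ∑ x ∈ Finset.Nat.antidiagonalTuple (m + 1) k, ∏ i, catalan (x i) := by
  intro m
  induction m with
  | zero =>
    intro k
    rw [card_one, Finset.Nat.antidiagonalTuple_one, Finset.sum_singleton]
    simp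
  | succ m ih =>
    intro k
    rw [card_step (m + 1) k (by omega), sum_tuple_succ]
    exact Finset.sum_congr rfl fun ab _ => by rw [ih ab.2]

end LatticePathAux

theorem lattice_paths_eq_sum_prod_catalan (m k : ℕ) (hm : 1 ≤ m) :
    Set.ncard {l : List Bool | l.count true = m + k ∧ l.count false = k ∧
        ∀ i, 0 < (l.take i).count true →
          (l.take i).count false < (l.take i).count true} =
      ∑ x ∈ Finset.Nat.antidiagonalTuple m k, ∏ i, catalan (x i) := by
  obtain ⟨m', rfl⟩ : ∃ m', m = m' + 1 := ⟨m - 1, by omega⟩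
  have h := LatticePathAux.card_pathSet m' k
  rw [Nat.card_coe_set_eq] at h
  exact h
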